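/- arXiv:1709.05613 — 2 statements merged into one kernel-verified Lean document; each statement's English description precedes it below -/
import Mathlib

section
/- If X has the GLL density with parameters θ > 0, λ ≥ 0, p ≥ 0, then for any real r > −θ, E[X^r log X] = −(θ/(r+θ))^(p+3) · (p+1)·(2+p+λ(r+θ)) / (θ·(1+p+λθ)). -/
open Real MeasureTheory

/-- The generalized Log-Lindley (GLL) density. -/
noncomputable def gll (θ lam p x : ℝ) : ℝ :=
  θ ^ (2 + p) / (Real.Gamma (1 + p) * (1 + p + lam * θ)) *
    (-Real.log x) ^ p * (lam - Real.log x) * x ^ (θ - 1)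

lemma gll_exp_neg_image : (fun t : ℝ => Real.exp (-t)) '' Set.Ioi 0 = Set.Ioo (0:ℝ) 1 := by
  ext x
  constructor
  · rintro ⟨t, ht, rfl⟩
    exact ⟨Real.exp_pos _, by rw [Real.exp_lt_one_iff]; simpa using ht⟩
  · rintro ⟨hx0, hx1⟩
    exact ⟨-Real.log x, by simpa using Real.log_neg hx0 hx1,
      by simp [Real.exp_log hx0]⟩

lemma gll_hasDeriv : ∀ t ∈ Set.Ioi (0:ℝ),
    HasDerivWithinAt (fun t : ℝ => Real.exp (-t)) (-Real.exp (-t)) (Set.Ioi 0) t := by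
  intro t _
  have h := ((Real.hasDerivAt_exp (-t)).comp t (hasDerivAt_neg t))
  simpa [Function.comp_def] using h.hasDerivWithinAt

lemma gll_injOn : Set.InjOn (fun t : ℝ => Real.exp (-t)) (Set.Ioi 0) :=
  (Real.exp_injective.comp neg_injective).injOn

lemma gll_subst (g : ℝ → ℝ) :
    ∫ x in Set.Ioo (0:ℝ) 1, g x = ∫ t in Set.Ioi (0:ℝ), Real.exp (-t) * g (Real.exp (-t)) := by
  rw [← gll_exp_neg_image,
    integral_image_eq_integral_abs_deriv_smul measurableSet_Ioi gll_hasDeriv gll_injOn g]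
  refine setIntegral_congr_fun measurableSet_Ioi fun t _ => ?_
  simp [abs_of_nonneg (Real.exp_nonneg (-t)), smul_eq_mul]

lemma gll_comp_eq (s a t : ℝ) :
    Real.exp (-t) * ((-Real.log (Real.exp (-t))) ^ s * Real.exp (-t) ^ (a - 1)) =
      t ^ s * Real.exp (-(a * t)) := by
  rw [Real.log_exp, neg_neg, Real.rpow_def_of_pos (Real.exp_pos _), Real.log_exp]
  rw [show Real.exp (-t) * (t ^ s * Real.exp (-t * (a - 1))) =
    t ^ s * (Real.exp (-t) * Real.exp (-t * (a - 1))) from by ring, ← Real.exp_add]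
  ring_nf

lemma gll_key_integrable {s a : ℝ} (hs : 0 ≤ s) (ha : 0 < a) :
    IntegrableOn (fun x => (-Real.log x) ^ s * x ^ (a - 1)) (Set.Ioo (0:ℝ) 1) := by
  rw [← gll_exp_neg_image,
    integrableOn_image_iff_integrableOn_abs_deriv_smul measurableSet_Ioi gll_hasDeriv gll_injOn]
  have h : IntegrableOn (fun t : ℝ => t ^ s * Real.exp (-a * t ^ (1:ℝ))) (Set.Ioi 0) :=
    integrableOn_rpow_mul_exp_neg_mul_rpow (by linarith) one_pos ha
  refine h.congr_fun (fun t ht => ?_) measurableSet_Ioi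
  simp only [smul_eq_mul, abs_neg, abs_of_nonneg (Real.exp_nonneg (-t))]
  rw [gll_comp_eq, Real.rpow_one]
  ring_nf

lemma gll_key {s a : ℝ} (hs : 0 ≤ s) (ha : 0 < a) :
    ∫ x in Set.Ioo (0:ℝ) 1, (-Real.log x) ^ s * x ^ (a - 1) =
      (1 / a) ^ (s + 1) * Real.Gamma (s + 1) := by
  rw [gll_subst (fun x => (-Real.log x) ^ s * x ^ (a - 1))]
  rw [← Real.integral_rpow_mul_exp_neg_mul_Ioi (by linarith : (0:ℝ) < s + 1) ha]
  refine setIntegral_congr_fun measurableSet_Ioi fun t _ => ?_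
  rw [gll_comp_eq]
  norm_num

theorem gll_xr_log_moment (θ lam p r : ℝ) (hθ : 0 < θ) (hlam : 0 ≤ lam) (hp : 0 ≤ p)
    (hr : -θ < r) :
    ∫ x in Set.Ioo (0:ℝ) 1, x ^ r * Real.log x * gll θ lam p x =
      -((θ / (r + θ)) ^ (p + 3) * (p + 1) * (2 + p + lam * (r + θ)) /
        (θ * (1 + p + lam * θ))) := by
  set s := r + θ with hs_def
  have hs : 0 < s := by simp only [hs_def]; linarith
  set C := θ ^ (2 + p) / (Real.Gamma (1 + p) * (1 + p + lam * θ)) with hC_def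
  have hstep : ∫ x in Set.Ioo (0:ℝ) 1, x ^ r * Real.log x * gll θ lam p x =
      ∫ x in Set.Ioo (0:ℝ) 1,
        C * (-(lam * ((-Real.log x) ^ (p + 1) * x ^ (s - 1)) +
          (-Real.log x) ^ (p + 2) * x ^ (s - 1))) := by
    refine setIntegral_congr_fun measurableSet_Ioo fun x hx => ?_
    obtain ⟨hx0, hx1⟩ := hx
    have hL : 0 < -Real.log x := by have := Real.log_neg hx0 hx1; linarith
    have e1 : x ^ (s - 1) = x ^ r * x ^ (θ - 1) := by
      rw [← Real.rpow_add hx0]; congr 1; simp [hs_def]; ring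
    have e2 : (-Real.log x) ^ (p + 1) = (-Real.log x) ^ p * (-Real.log x) :=
      Real.rpow_add_one hL.ne' p
    have e3 : (-Real.log x) ^ (p + 2) = (-Real.log x) ^ (p + 1) * (-Real.log x) := by
      rw [← Real.rpow_add_one hL.ne' (p + 1)]; congr 1; ring
    rw [e3, e2, e1]
    unfold gll
    rw [← hC_def]
    ring
  rw [hstep]
  have hint1 : IntegrableOn (fun x => (-Real.log x) ^ (p + 1) * x ^ (s - 1))
      (Set.Ioo (0:ℝ) 1) := gll_key_integrable (by linarith) hs
  have hint2 : IntegrableOn (fun x => (-Real.log x) ^ (p + 2) * x ^ (s - 1))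
      (Set.Ioo (0:ℝ) 1) := gll_key_integrable (by linarith) hs
  rw [integral_const_mul]
  rw [integral_neg, integral_add (hint1.const_mul lam) hint2, integral_const_mul]
  have h1 : ∫ x in Set.Ioo (0:ℝ) 1, (-Real.log x) ^ (p + 1) * x ^ (s - 1) =
      (1 / s) ^ (p + 2) * Real.Gamma (p + 2) := by
    have := gll_key (s := p + 1) (a := s) (by linarith) hs
    simpa [show p + 1 + 1 = p + 2 by ring] using this
  have h2 : ∫ x in Set.Ioo (0:ℝ) 1, (-Real.log x) ^ (p + 2) * x ^ (s - 1) =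
      (1 / s) ^ (p + 3) * Real.Gamma (p + 3) := by
    have := gll_key (s := p + 2) (a := s) (by linarith) hs
    simpa [show p + 2 + 1 = p + 3 by ring] using this
  rw [h1, h2]
  -- Gamma recurrences
  have hG1 : Real.Gamma (p + 2) = (p + 1) * Real.Gamma (1 + p) := by
    rw [show p + 2 = (p + 1) + 1 by ring, Real.Gamma_add_one (by linarith)]
    rw [show (1:ℝ) + p = p + 1 by ring]
  have hG2 : Real.Gamma (p + 3) = (p + 2) * (p + 1) * Real.Gamma (1 + p) := by
    rw [show p + 3 = (p + 2) + 1 by ring, Real.Gamma_add_one (by linarith), hG1]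
    ring
  -- rpow algebra
  have hv2 : (1 / s) ^ (p + 2) = (1 / s) ^ (p + 3) * s := by
    rw [show p + 3 = (p + 2) + 1 by ring, Real.rpow_add_one (by positivity) (p + 2)]
    field_simp
  have hθs : (θ / s) ^ (p + 3) = θ ^ (2 + p) * θ * (1 / s) ^ (p + 3) := by
    rw [div_eq_mul_one_div, Real.mul_rpow hθ.le (by positivity),
      show p + 3 = (2 + p) + 1 by ring, Real.rpow_add_one hθ.ne' (2 + p)]
  rw [hG1, hG2, hv2, hθs, hC_def]
  have hGpos : 0 < Real.Gamma (1 + p) := Real.Gamma_pos_of_pos (by linarith)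
  have hden : (0:ℝ) < 1 + p + lam * θ := by positivity
  field_simp
  ring
end

section
/- For any integer p ≥ 0, θ > 0, λ ≥ 0 and x ∈ (0,1), the GLL cdf satisfies F(x;θ,λ,p) = x^θ·[1 + Σ_{k=1}^{p} (−θ log x)^k/k! + (−θ log x)^(1+p)/((1+p+λθ)·p!)] > x^θ. -/
open Real MeasureTheory

open Filter Set Topology

/-- Antiderivative of the GLL density. -/
noncomputable def gllF (θ lam : ℝ) (p : ℕ) (t : ℝ) : ℝ :=
  t ^ θ * (1 + (∑ k ∈ Finset.Icc 1 p, (-(θ * Real.log t)) ^ k / (Nat.factorial k : ℝ)) +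
    (-(θ * Real.log t)) ^ (1 + p) / ((1 + (p : ℝ) + lam * θ) * (Nat.factorial p : ℝ)))

lemma gll_tele (p : ℕ) (u : ℝ) :
    (∑ k ∈ Finset.Icc 1 p, u ^ k / (Nat.factorial k : ℝ)) -
      (∑ k ∈ Finset.Icc 1 p, (k : ℝ) * u ^ (k - 1) / (Nat.factorial k : ℝ)) =
      u ^ p / (Nat.factorial p : ℝ) - 1 := by
  induction p with
  | zero => simp
  | succ n ih =>
    rw [Finset.sum_Icc_succ_top (Nat.le_add_left 1 n),
        Finset.sum_Icc_succ_top (Nat.le_add_left 1 n)]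
    have h : (Nat.factorial (n+1) : ℝ) = ((n:ℝ)+1) * Nat.factorial n := by
      push_cast [Nat.factorial_succ]; ring
    have h0 : (Nat.factorial n : ℝ) ≠ 0 := Nat.cast_ne_zero.2 (Nat.factorial_ne_zero n)
    have h1 : ((n:ℝ)+1) ≠ 0 := by positivity
    simp only [Nat.add_sub_cancel, Nat.cast_add, Nat.cast_one]
    rw [h]
    field_simp
    have hinv : (Nat.factorial n : ℝ) * ((Nat.factorial n : ℝ))⁻¹ = 1 := mul_inv_cancel₀ h0
    linear_combination (((n:ℝ)+1) * (Nat.factorial n : ℝ)) * ih + (((n:ℝ)+1) * u^n) * hinv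

lemma gllF_hasDeriv (θ lam : ℝ) (p : ℕ) (hθ : 0 < θ) (hc : (0:ℝ) < 1 + (p:ℝ) + lam * θ)
    (t : ℝ) (ht : 0 < t) :
    HasDerivAt (gllF θ lam p) (gll θ lam (p:ℝ) t) t := by
  have hlog : HasDerivAt Real.log t⁻¹ t := Real.hasDerivAt_log ht.ne'
  have hu : HasDerivAt (fun s => -(θ * Real.log s)) (-(θ * t⁻¹)) t := by
    simpa using ((hlog.const_mul θ).fun_neg)
  set u : ℝ := -(θ * Real.log t) with hu_def
  have hsum : HasDerivAt
      (fun s => ∑ k ∈ Finset.Icc 1 p, (-(θ * Real.log s)) ^ k / (Nat.factorial k : ℝ))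
      (∑ k ∈ Finset.Icc 1 p, ((k:ℝ) * u ^ (k-1) * (-(θ * t⁻¹))) / (Nat.factorial k : ℝ)) t :=
    HasDerivAt.fun_sum fun k _ => (hu.pow k).div_const _
  have hlast : HasDerivAt
      (fun s => (-(θ * Real.log s)) ^ (1+p) / ((1 + (p:ℝ) + lam * θ) * (Nat.factorial p : ℝ)))
      ((((1:ℕ)+p : ℕ):ℝ) * u ^ ((1+p)-1) * (-(θ * t⁻¹)) /
        ((1 + (p:ℝ) + lam * θ) * (Nat.factorial p : ℝ))) t :=
    (hu.pow (1+p)).div_const _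
  have hrpow : HasDerivAt (fun s : ℝ => s ^ θ) (θ * t ^ (θ - 1)) t := by
    simpa using Real.hasDerivAt_rpow_const (x := t) (p := θ) (Or.inl ht.ne')
  have total := hrpow.fun_mul ((hsum.const_add (1:ℝ)).fun_add hlast)
  convert total using 1
  case e'_4 => rfl
  case e'_5 => rfl
  case e'_8 => rfl
  have hfact : (Nat.factorial p : ℝ) ≠ 0 := Nat.cast_ne_zero.2 (Nat.factorial_ne_zero p)
  have htele := gll_tele p u
  set S1 : ℝ := ∑ k ∈ Finset.Icc 1 p, u ^ k / (Nat.factorial k : ℝ) with hS1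
  set S2 : ℝ := ∑ k ∈ Finset.Icc 1 p, (k:ℝ) * u ^ (k-1) / (Nat.factorial k : ℝ) with hS2
  have hsum_eq : (∑ k ∈ Finset.Icc 1 p, ((k:ℝ) * u ^ (k-1) * (-(θ * t⁻¹))) / (Nat.factorial k : ℝ))
      = S2 * (-(θ * t⁻¹)) := by
    rw [hS2, Finset.sum_mul]
    exact Finset.sum_congr rfl fun k _ => by ring
  have hts : t ^ θ = t ^ (θ - 1) * t := by
    rw [← Real.rpow_add_one ht.ne' (θ - 1), sub_add_cancel]
  have hθp : θ ^ (2 + (p:ℝ)) = θ ^ (2 + p : ℕ) := by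
    rw [← Real.rpow_natCast θ (2+p)]; push_cast; ring_nf
  have hlogp : (-Real.log t) ^ ((p:ℕ):ℝ) = (-Real.log t) ^ (p:ℕ) := Real.rpow_natCast _ _
  have hGamma : Real.Gamma (1 + (p:ℝ)) = (Nat.factorial p : ℝ) := by
    rw [add_comm]; exact_mod_cast Real.Gamma_nat_eq_factorial p
  have hp1 : ((1+p:ℕ)-1 : ℕ) = p := by omega
  have hS1eq : S1 = S2 + u ^ p / (Nat.factorial p : ℝ) - 1 := by linarith
  rw [hsum_eq]
  simp only [gll, hθp, hlogp, hGamma, hp1]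
  rw [hts, hS1eq, hu_def]
  push_cast
  field_simp
  ring

lemma gll_rpow_log_tendsto (θ : ℝ) (hθ : 0 < θ) (k : ℕ) :
    Tendsto (fun t : ℝ => t ^ θ * (-(θ * Real.log t)) ^ k) (𝓝[>] (0:ℝ)) (𝓝 0) := by
  have h := (isLittleO_abs_log_rpow_rpow_nhdsGT_zero (k:ℝ)
    (neg_lt_zero.2 hθ)).tendsto_div_nhds_zero
  have h2 : Tendsto (fun x : ℝ => θ ^ k * (|Real.log x| ^ (k:ℝ) / x ^ (-θ)))
      (𝓝[>] (0:ℝ)) (𝓝 (θ ^ k * 0)) := h.const_mul _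
  rw [mul_zero] at h2
  refine h2.congr' ?_
  filter_upwards [Ioo_mem_nhdsGT_of_mem (by simp : (0:ℝ) ∈ Ico (0:ℝ) 1)] with t ht
  have ht0 : (0:ℝ) < t := ht.1
  have hlog : Real.log t ≤ 0 := Real.log_nonpos ht0.le ht.2.le
  rw [Real.rpow_natCast, abs_of_nonpos hlog, Real.rpow_neg ht0.le, div_inv_eq_mul]
  ring

lemma gllF_tendsto_zero (θ lam : ℝ) (p : ℕ) (hθ : 0 < θ) :
    Tendsto (gllF θ lam p) (𝓝[>] (0:ℝ)) (𝓝 0) := by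
  have hA := gll_rpow_log_tendsto θ hθ 0
  have hB : Tendsto (fun t : ℝ => ∑ k ∈ Finset.Icc 1 p,
      t ^ θ * (-(θ * Real.log t)) ^ k / (Nat.factorial k : ℝ)) (𝓝[>] (0:ℝ)) (𝓝 0) := by
    have := tendsto_finset_sum (Finset.Icc 1 p)
      (fun k (_ : k ∈ Finset.Icc 1 p) =>
        (gll_rpow_log_tendsto θ hθ k).div_const (Nat.factorial k : ℝ))
    simpa using this
  have hC := (gll_rpow_log_tendsto θ hθ (1+p)).div_const
    ((1 + (p:ℝ) + lam * θ) * (Nat.factorial p : ℝ))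
  rw [zero_div] at hC
  have htot := (hA.add hB).add hC
  rw [add_zero, add_zero] at htot
  refine htot.congr (fun t => ?_)
  simp only [gllF, pow_zero, mul_one, mul_add, Finset.mul_sum, mul_div_assoc]

lemma gll_pos (θ lam : ℝ) (p : ℕ) (hθ : 0 < θ) (hlam : 0 ≤ lam) (t : ℝ)
    (ht : t ∈ Ioo (0:ℝ) 1) : 0 < gll θ lam (p:ℝ) t := by
  have hlog : Real.log t < 0 := Real.log_neg ht.1 ht.2
  have hGamma : Real.Gamma (1 + (p:ℝ)) = (Nat.factorial p : ℝ) := by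
    rw [add_comm]; exact_mod_cast Real.Gamma_nat_eq_factorial p
  have h1 : 0 < θ ^ (2 + (p:ℝ)) := Real.rpow_pos_of_pos hθ _
  have h2 : 0 < Real.Gamma (1 + (p:ℝ)) * (1 + (p:ℝ) + lam * θ) := by
    rw [hGamma]; positivity
  have h3 : 0 < (-Real.log t) ^ ((p:ℕ):ℝ) := Real.rpow_pos_of_pos (by linarith) _
  have h4 : 0 < lam - Real.log t := by linarith
  have h5 : 0 < t ^ (θ - 1) := Real.rpow_pos_of_pos ht.1 _
  exact mul_pos (mul_pos (mul_pos (div_pos h1 h2) h3) h4) h5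

lemma gll_continuousOn (θ lam p : ℝ) (hp : 0 ≤ p) :
    ContinuousOn (gll θ lam p) (Ioi (0:ℝ)) := by
  apply ContinuousOn.mono (s := {t : ℝ | t ≠ 0})
  · intro t ht
    have hlogc : ContinuousWithinAt Real.log {t : ℝ | t ≠ 0} t :=
      (Real.continuousAt_log ht).continuousWithinAt
    exact ((((continuousWithinAt_const.mul
      (hlogc.neg.rpow_const (Or.inr hp)))).mul
      (continuousWithinAt_const.sub hlogc)).mul
      (continuousWithinAt_id.rpow_const (Or.inl ht)))
  · intro t ht
    exact ne_of_gt ht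

theorem gll_cdf_integer_p_gt (θ lam : ℝ) (p : ℕ) (hθ : 0 < θ) (hlam : 0 ≤ lam)
    (x : ℝ) (hx : x ∈ Set.Ioo (0:ℝ) 1) :
    (∫ t in Set.Ioo (0:ℝ) x, gll θ lam (p : ℝ) t) =
      x ^ θ * (1 + (∑ k ∈ Finset.Icc 1 p, (-(θ * Real.log x)) ^ k / (Nat.factorial k : ℝ)) +
        (-(θ * Real.log x)) ^ (1 + p) / ((1 + (p : ℝ) + lam * θ) * (Nat.factorial p : ℝ))) ∧
    x ^ θ < ∫ t in Set.Ioo (0:ℝ) x, gll θ lam (p : ℝ) t := by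
  obtain ⟨hx0, hx1⟩ := hx
  have hc : (0:ℝ) < 1 + (p:ℝ) + lam * θ := by positivity
  have hfact : (0:ℝ) < (Nat.factorial p : ℝ) := by
    exact_mod_cast Nat.factorial_pos p
  set a : ℕ → ℝ := fun n => x / ((n:ℝ) + 2) with ha_def
  have han : ∀ n : ℕ, a n ∈ Ioo (0:ℝ) x := by
    intro n
    constructor
    · positivity
    · rw [ha_def]
      rw [div_lt_iff₀ (by positivity)]
      nlinarith [Nat.cast_nonneg (α := ℝ) n]
  have ha0 : Tendsto a atTop (𝓝 0) := by
    apply Tendsto.div_atTop (tendsto_const_nhds (x := x))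
    exact tendsto_atTop_add_const_right _ 2 tendsto_natCast_atTop_atTop
  have hderiv : ∀ t ∈ Ioo (0:ℝ) 1, HasDerivAt (gllF θ lam p) (gll θ lam (p:ℝ) t) t :=
    fun t ht => gllF_hasDeriv θ lam p hθ hc t ht.1
  have hcontOn : ∀ n : ℕ, ContinuousOn (gll θ lam (p:ℝ)) (Icc (a n) x) := by
    intro n
    exact (gll_continuousOn θ lam (p:ℝ) (Nat.cast_nonneg p)).mono
      (fun t ht => lt_of_lt_of_le (han n).1 ht.1)
  have hFx_sub : ∀ n : ℕ, (∫ t in Ioc (a n) x, gll θ lam (p:ℝ) t)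
      = gllF θ lam p x - gllF θ lam p (a n) := by
    intro n
    have hax : a n ≤ x := (han n).2.le
    have h1 : ∀ t ∈ uIcc (a n) x, HasDerivAt (gllF θ lam p) (gll θ lam (p:ℝ) t) t := by
      intro t ht
      rw [uIcc_of_le hax] at ht
      exact hderiv t ⟨lt_of_lt_of_le (han n).1 ht.1, lt_of_le_of_lt ht.2 hx1⟩
    have h2 : IntervalIntegrable (gll θ lam (p:ℝ)) volume (a n) x := by
      rw [intervalIntegrable_iff_integrableOn_Ioc_of_le hax]
      exact ((hcontOn n).integrableOn_Icc).mono_set Ioc_subset_Icc_self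
    have h3 := intervalIntegral.integral_eq_sub_of_hasDerivAt h1 h2
    rw [intervalIntegral.integral_of_le hax] at h3
    exact h3
  have hIntIoc : ∀ n : ℕ, IntegrableOn (gll θ lam (p:ℝ)) (Ioc (a n) x) :=
    fun n => ((hcontOn n).integrableOn_Icc).mono_set Ioc_subset_Icc_self
  have hFnn : ∀ t ∈ Ioo (0:ℝ) 1, 0 ≤ gllF θ lam p t := by
    intro t ht
    have hu : 0 ≤ -(θ * Real.log t) := by nlinarith [Real.log_neg ht.1 ht.2]
    have h1 : 0 ≤ ∑ k ∈ Finset.Icc 1 p, (-(θ * Real.log t)) ^ k / (Nat.factorial k : ℝ) :=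
      Finset.sum_nonneg fun k _ => div_nonneg (pow_nonneg hu k) (Nat.cast_nonneg _)
    have h2 : 0 ≤ (-(θ * Real.log t)) ^ (1+p) / ((1 + (p:ℝ) + lam * θ) * (Nat.factorial p : ℝ)) :=
      div_nonneg (pow_nonneg hu _) (by positivity)
    have h3 : (0:ℝ) ≤ t ^ θ := (Real.rpow_pos_of_pos ht.1 θ).le
    apply mul_nonneg h3
    linarith
  have hbound : ∀ n : ℕ, (∫ t in Ioc (a n) x, ‖gll θ lam (p:ℝ) t‖) ≤ gllF θ lam p x := by
    intro n
    have heq : EqOn (fun t => ‖gll θ lam (p:ℝ) t‖) (gll θ lam (p:ℝ)) (Ioc (a n) x) := by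
      intro t ht
      exact Real.norm_of_nonneg (gll_pos θ lam p hθ hlam t
        ⟨lt_of_lt_of_le (han n).1 ht.1.le, lt_of_le_of_lt ht.2 hx1⟩).le
    rw [setIntegral_congr_fun measurableSet_Ioc heq, hFx_sub n]
    have := hFnn (a n) ⟨(han n).1, (han n).2.trans hx1⟩
    linarith
  have hInt : IntegrableOn (gll θ lam (p:ℝ)) (Ioc 0 x) :=
    integrableOn_Ioc_of_intervalIntegral_norm_bounded_left hIntIoc ha0
      (Eventually.of_forall hbound)
  have hmono : Monotone (fun n : ℕ => Ioc (a n) x) := by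
    intro m n hmn
    apply Ioc_subset_Ioc_left
    rw [ha_def]
    have h2 : ((m:ℝ)+2) ≤ ((n:ℝ)+2) := by exact_mod_cast Nat.add_le_add_right hmn 2
    exact div_le_div_of_nonneg_left hx0.le (by positivity) h2 |>.trans_eq rfl
  have hunion : (⋃ n, Ioc (a n) x) = Ioc 0 x := by
    apply Subset.antisymm
    · exact iUnion_subset fun n => Ioc_subset_Ioc_left (han n).1.le
    · intro t ht
      obtain ⟨n, hn⟩ := exists_nat_gt (x / t)
      refine mem_iUnion.2 ⟨n, ?_, ht.2⟩
      rw [ha_def]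
      rw [div_lt_iff₀ (by positivity)]
      rw [div_lt_iff₀ ht.1] at hn
      nlinarith [ht.1]
  have htends := tendsto_setIntegral_of_monotone (fun n : ℕ => measurableSet_Ioc) hmono
    (by rw [hunion]; exact hInt)
  have hFan : Tendsto (fun n => gllF θ lam p x - gllF θ lam p (a n)) atTop
      (𝓝 (gllF θ lam p x - 0)) := by
    apply tendsto_const_nhds.sub
    exact (gllF_tendsto_zero θ lam p hθ).comp
      (tendsto_nhdsWithin_iff.2 ⟨ha0, Eventually.of_forall fun n => (han n).1⟩)
  rw [sub_zero] at hFan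
  have heq2 : (∫ t in ⋃ n, Ioc (a n) x, gll θ lam (p:ℝ) t) = gllF θ lam p x :=
    tendsto_nhds_unique htends (hFan.congr fun n => (hFx_sub n).symm)
  rw [hunion] at heq2
  have key : (∫ t in Set.Ioo (0:ℝ) x, gll θ lam (p:ℝ) t) = gllF θ lam p x := by
    rw [← integral_Ioc_eq_integral_Ioo]
    exact heq2
  constructor
  · rw [key]; rfl
  · rw [key]
    have hu : 0 < -(θ * Real.log x) := by nlinarith [Real.log_neg hx0 hx1]
    have h1 : 0 ≤ ∑ k ∈ Finset.Icc 1 p, (-(θ * Real.log x)) ^ k / (Nat.factorial k : ℝ) :=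
      Finset.sum_nonneg fun k _ => div_nonneg (pow_nonneg hu.le k) (Nat.cast_nonneg _)
    have h2 : 0 < (-(θ * Real.log x)) ^ (1+p) / ((1 + (p:ℝ) + lam * θ) * (Nat.factorial p : ℝ)) :=
      div_pos (pow_pos hu _) (by positivity)
    have h3 : (0:ℝ) < x ^ θ := Real.rpow_pos_of_pos hx0 θ
    calc x ^ θ = x ^ θ * 1 := (mul_one _).symm
    _ < _ := by
      rw [gllF]
      apply (mul_lt_mul_iff_right₀ h3).2
      linarith
end
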